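/- Let σ : ℝ → ℝ be continuously differentiable at some point α ∈ ℝ with σ′(α) ≠ 0. Then for every compact set K ⊆ ℝ and every ε > 0 there exist real numbers a, b, c, d (with a ≠ 0) such that |c·σ(a·x + b) + d − x| < ε for all x ∈ K; that is, a single σ-activated neuron composed with affine maps uniformly approximates the identity function on K. -/

import Mathlib

open scoped BigOperators
open MeasureTheory
open scoped Classical

/-- A feedforward neural network, given by a number of affine layers (`depth`),
layer dimensions (`dims i` is the dimension of the output of the `i`-th affine map,
with `dims 0` the input dimension; the output layer has dimension 1), weights and biases.
Data beyond the relevant indices is junk. -/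
structure NeuralNet where
  depth : ℕ
  dims : ℕ → ℕ
  weight : ℕ → ℕ → ℕ → ℝ
  bias : ℕ → ℕ → ℝ

namespace NeuralNet

/-- Output of the `i`-th hidden layer (layer `0` is the input itself),
where the activation `σ` is applied entrywise after each affine map. -/
def hidden (σ : ℝ → ℝ) (net : NeuralNet) (x : ℕ → ℝ) : ℕ → ℕ → ℝ
  | 0 => x
  | i + 1 => fun r =>
      σ ((∑ c ∈ Finset.range (net.dims i),
            net.weight (i + 1) r c * hidden σ net x i c) + net.bias (i + 1) r)

/-- The (scalar) output of the network: the final affine map `A_depth`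
applied, without activation, to the last hidden layer. -/
def output (σ : ℝ → ℝ) (net : NeuralNet) (x : ℕ → ℝ) : ℝ :=
  (∑ c ∈ Finset.range (net.dims (net.depth - 1)),
    net.weight net.depth 0 c * hidden σ net x (net.depth - 1) c) + net.bias net.depth 0

/-- The width of a network: the maximal dimension of a hidden layer. -/
def width (net : NeuralNet) : ℕ :=
  (Finset.Icc 1 (net.depth - 1)).sup net.dims

/-- The total number of (hidden) nodes of a network. -/
def totalNodes (net : NeuralNet) : ℕ :=
  ∑ i ∈ Finset.Icc 1 (net.depth - 1), net.dims i

/-- `net` represents the function `f : ℝ^d → ℝ` with activation `σ`. -/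
def Represents (σ : ℝ → ℝ) (net : NeuralNet) {d : ℕ} (f : (Fin d → ℝ) → ℝ) : Prop :=
  1 ≤ net.depth ∧ net.dims 0 = d ∧
    ∀ x : Fin d → ℝ,
      net.output σ (fun i => if h : i < d then x ⟨i, h⟩ else 0) = f x

/-- `net` represents the function `f : ℝ^d → ℝ` with activation `σ`, as a network with
truncated inputs: each input coordinate `x` is first replaced by `⌊base ^ κ * x⌋`. -/
def RepresentsTrunc (σ : ℝ → ℝ) (net : NeuralNet) (base : ℝ) {d : ℕ}
    (f : (Fin d → ℝ) → ℝ) : Prop :=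
  ∃ κ : ℤ, 1 ≤ net.depth ∧ net.dims 0 = d ∧
    ∀ x : Fin d → ℝ,
      net.output σ (fun i => if h : i < d then (⌊base ^ κ * x ⟨i, h⟩⌋ : ℝ) else 0) = f x

end NeuralNet

/-- The ReLU activation function. -/
def relu : ℝ → ℝ := fun t => max t 0

/-- `σ` has the density property: for every dimension `d`, the span of
`{x ↦ σ (w ⬝ x - θ)}` is dense in `C(ℝ^d)` for uniform convergence on compact sets. -/
def DensityProperty (σ : ℝ → ℝ) : Prop :=
  ∀ (d : ℕ) (f : (Fin d → ℝ) → ℝ), Continuous f →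
    ∀ K : Set (Fin d → ℝ), IsCompact K → ∀ ε : ℝ, 0 < ε →
      ∃ (N : ℕ) (c : Fin N → ℝ) (w : Fin N → Fin d → ℝ) (θ : Fin N → ℝ),
        ∀ x ∈ K, |f x - ∑ i : Fin N, c i * σ ((∑ j : Fin d, w i j * x j) - θ i)| < ε

/-- `σ` is continuously differentiable at some point with a nonzero derivative there:
differentiable on a neighborhood of `α`, with derivative continuous at `α` and nonzero. -/
def ContDiffAtNonzeroDeriv (σ : ℝ → ℝ) : Prop :=
  ∃ α : ℝ, (∀ᶠ x in nhds α, DifferentiableAt ℝ σ x) ∧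
    ContinuousAt (deriv σ) α ∧ deriv σ α ≠ 0

/-- `σ` is a polynomial function. -/
def IsPolyFun (σ : ℝ → ℝ) : Prop :=
  ∃ p : Polynomial ℝ, ∀ x : ℝ, σ x = p.eval x

/-- `σ` is a non-affine polynomial function (degree at least 2). -/
def IsNonAffinePolyFun (σ : ℝ → ℝ) : Prop :=
  ∃ p : Polynomial ℝ, 2 ≤ p.natDegree ∧ ∀ x : ℝ, σ x = p.eval x

/-- a single neuron composed with affine maps uniformly approximates
the identity on compact sets. -/
theorem statement10 (σ : ℝ → ℝ) (α : ℝ)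
    (h1 : ∀ᶠ x in nhds α, DifferentiableAt ℝ σ x)
    (h2 : ContinuousAt (deriv σ) α) (h3 : deriv σ α ≠ 0)
    (K : Set ℝ) (hK : IsCompact K) (ε : ℝ) (hε : 0 < ε) :
    ∃ a b c d : ℝ, a ≠ 0 ∧ ∀ x ∈ K, |c * σ (a * x + b) + d - x| < ε := by
  set s := deriv σ α with hs
  have strict : HasStrictDerivAt σ s α :=
    hasStrictDerivAt_of_hasDerivAt_of_continuousAt
      (h1.mono fun y hy => hy.hasDerivAt) h2
  obtain ⟨M, hM⟩ := hK.isBounded.exists_norm_le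
  have hM0 : 0 ≤ max M 0 := le_max_right _ _
  set M' : ℝ := max M 0 + 1 with hM'
  have hM'pos : 0 < M' := by positivity
  have hMx : ∀ x ∈ K, |x| ≤ M' := fun x hx =>
    le_trans (le_trans (hM x hx) (le_max_left _ _)) (by linarith)
  have hspos : 0 < |s| := abs_pos.mpr h3
  set c' : ℝ := ε * |s| / (2 * M') with hc'
  have hc'pos : 0 < c' := by positivity
  have ho := strict.hasStrictFDerivAt.isLittleO
  have hcurve : Filter.Tendsto (fun t : ℝ => ((α + t, α) : ℝ × ℝ)) (nhds 0) (nhds (α, α)) := by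
    have hc : Continuous fun t : ℝ => ((α + t, α) : ℝ × ℝ) := by continuity
    simpa using hc.tendsto 0
  have hev : ∀ᶠ t : ℝ in nhds 0, ‖σ (α + t) - σ α - s * t‖ ≤ c' * ‖t‖ := by
    have := hcurve.eventually (ho.def hc'pos)
    filter_upwards [this] with t ht
    simpa [mul_comm] using ht
  obtain ⟨δ, hδpos, hδ⟩ := Metric.eventually_nhds_iff.mp hev
  set a : ℝ := δ / (2 * M') with ha
  have hapos : 0 < a := by positivity
  have hane : a ≠ 0 := ne_of_gt hapos
  refine ⟨a, α, 1 / (a * s), -(σ α) / (a * s), hane, fun x hx => ?_⟩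
  have hxM := hMx x hx
  have hax : |a * x| < δ := by
    rw [abs_mul, abs_of_pos hapos]
    calc a * |x| ≤ a * M' := by nlinarith
    _ = δ / 2 := by rw [ha, div_mul_eq_mul_div, mul_div_mul_right _ _ hM'pos.ne']
    _ < δ := by linarith
  have hbound : ‖σ (α + a * x) - σ α - s * (a * x)‖ ≤ c' * ‖a * x‖ := by
    apply hδ
    rw [Real.dist_eq, sub_zero]; exact hax
  have heq : 1 / (a * s) * σ (a * x + α) + -(σ α) / (a * s) - x
      = (σ (α + a * x) - σ α - s * (a * x)) / (a * s) := by
    rw [add_comm (a * x) α]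
    field_simp
    ring
  rw [heq, abs_div, abs_mul]
  rw [Real.norm_eq_abs, Real.norm_eq_abs, abs_mul, abs_of_pos hapos] at hbound
  have h1' : |σ (α + a * x) - σ α - s * (a * x)| ≤ c' * (a * |x|) := hbound
  have h2' : c' * (a * |x|) ≤ c' * (a * M') :=
    mul_le_mul_of_nonneg_left (mul_le_mul_of_nonneg_left hxM hapos.le) hc'pos.le
  have h3' : c' * (a * M') / (a * |s|) = ε / 2 := by
    rw [hc']
    field_simp
  calc |σ (α + a * x) - σ α - s * (a * x)| / (|a| * |s|)
      ≤ c' * (a * M') / (|a| * |s|) := by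
        have hden : 0 < |a| * |s| := by positivity
        gcongr
        exact le_trans h1' h2'
    _ = ε / 2 := by rw [abs_of_pos hapos]; exact h3'
    _ < ε := by linarith
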